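/- Let G be a multigraph and f a divisor on G. If there is a legal game starting from f in which every vertex of G fires at least once, then f is a non-halting divisor. -/

import Mathlib

variable {V : Type*} [Fintype V] [DecidableEq V]

/-- The degree of vertex `v` in the multigraph with edge-multiplicity function `m`. -/
def mgDeg (m : V → V → ℕ) (v : V) : ℕ := ∑ u, m v u

/-- The divisor obtained from `f` by firing vertex `v`. -/
def mgFire (m : V → V → ℕ) (f : V → ℤ) (v : V) : V → ℤ :=
  fun u => if u = v then f v - mgDeg m v else f u + m v u

/-- The divisor obtained from `f` by firing the vertices of `L` in order. -/
def mgPlay (m : V → V → ℕ) (f : V → ℤ) (L : List V) : V → ℤ :=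
  L.foldl (mgFire m) f

/-- `L` is a legal game from `f`: each fired vertex is active when fired. -/
def mgLegal (m : V → V → ℕ) : (V → ℤ) → List V → Prop
  | _, [] => True
  | f, v :: L => ((mgDeg m v : ℤ) ≤ f v) ∧ mgLegal m (mgFire m f v) L

/-- A divisor is stable if no vertex is active. -/
def mgStable (m : V → V → ℕ) (f : V → ℤ) : Prop := ∀ v, f v < (mgDeg m v : ℤ)

/-- A divisor is halting if some legal game from it ends at a stable divisor. -/
def mgHalting (m : V → V → ℕ) (f : V → ℤ) : Prop :=
  ∃ L : List V, mgLegal m f L ∧ mgStable m (mgPlay m f L)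

/-- A divisor is recurrent if some non-empty legal game from it leads back to it. -/
def mgRecurrent (m : V → V → ℕ) (f : V → ℤ) : Prop :=
  ∃ L : List V, L ≠ [] ∧ mgLegal m f L ∧ mgPlay m f L = f

/-- A divisor is effective if it is nonnegative everywhere. -/
def mgEffective (f : V → ℤ) : Prop := ∀ v, 0 ≤ f v

/-- The degree of a divisor. -/
def mgDegDiv (f : V → ℤ) : ℤ := ∑ v, f v

/-- Distance of a divisor from a recurrent state. -/
noncomputable def mgDistRec (m : V → V → ℕ) (f : V → ℤ) : ℕ :=
  sInf {n : ℕ | ∃ g : V → ℤ, mgEffective g ∧ mgDegDiv g = (n : ℤ) ∧ mgRecurrent m (f + g)}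

/-- Distance of a divisor from a non-halting state. -/
noncomputable def mgDistNonhalt (m : V → V → ℕ) (f : V → ℤ) : ℕ :=
  sInf {n : ℕ | ∃ g : V → ℤ, mgEffective g ∧ mgDegDiv g = (n : ℤ) ∧ ¬ mgHalting m (f + g)}

/-- A multigraph is connected if any two vertices are joined by a path of
positive-multiplicity edges. -/
def mgConnected (m : V → V → ℕ) : Prop :=
  ∀ u v : V, Relation.ReflTransGen (fun a b => 0 < m a b) u v

/-- `f` and `g` are linearly equivalent: `f` can be transformed to `g` by firings. -/
def mgLinEquiv (m : V → V → ℕ) (f g : V → ℤ) : Prop :=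
  ∃ L : List V, mgPlay m f L = g

/-- A divisor is winnable if it is linearly equivalent to an effective divisor. -/
def mgWinnable (m : V → V → ℕ) (f : V → ℤ) : Prop :=
  ∃ g : V → ℤ, mgEffective g ∧ mgLinEquiv m f g

/-- The rank of a divisor. -/
noncomputable def mgRank (m : V → V → ℕ) (f : V → ℤ) : ℤ :=
  ((sInf {n : ℕ | ∃ g : V → ℤ, mgEffective g ∧ mgDegDiv g = (n : ℤ) ∧
    ¬ mgWinnable m (f - g)} : ℕ) : ℤ) - 1

set_option linter.unusedSectionVars false
set_option linter.unusedVariables false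

-- auxiliary lemmas
def mgW (m : V → V → ℕ) (v u : V) : ℤ := if u = v then -(mgDeg m v : ℤ) else (m v u : ℤ)

lemma mgFire_apply (m : V → V → ℕ) (f : V → ℤ) (v u : V) :
    mgFire m f v u = f u + mgW m v u := by
  unfold mgFire mgW; split <;> rename_i h
  · subst h; ring
  · rfl

lemma mgPlay_cons (m : V → V → ℕ) (f : V → ℤ) (v : V) (L : List V) :
    mgPlay m f (v :: L) = mgPlay m (mgFire m f v) L := rfl

lemma mgPlay_append (m : V → V → ℕ) (f : V → ℤ) (A B : List V) :
    mgPlay m f (A ++ B) = mgPlay m (mgPlay m f A) B := List.foldl_append ..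

lemma mgPlay_apply (m : V → V → ℕ) (f : V → ℤ) (L : List V) (u : V) :
    mgPlay m f L u = f u + (L.map (fun x => mgW m x u)).sum := by
  induction L generalizing f with
  | nil => simp [mgPlay]
  | cons v L ih =>
    rw [mgPlay_cons, ih, mgFire_apply]
    simp only [List.map_cons, List.sum_cons]
    ring

lemma mgPlay_perm (m : V → V → ℕ) (f : V → ℤ) {A B : List V} (h : A.Perm B) :
    mgPlay m f A = mgPlay m f B := by
  funext u
  rw [mgPlay_apply, mgPlay_apply, (h.map _).sum_eq]

lemma mgLegal_mono (m : V → V → ℕ) :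
    ∀ (L : List V) (f h : V → ℤ), (∀ u ∈ L, f u ≤ h u) → mgLegal m f L → mgLegal m h L
  | [], _, _, _, _ => trivial
  | v :: L, f, h, hle, ⟨hv, hL⟩ => by
    refine ⟨le_trans hv (hle v (by simp)), mgLegal_mono m L _ _ ?_ hL⟩
    intro u hu
    rw [mgFire_apply, mgFire_apply]
    exact add_le_add_left (hle u (by simp [hu])) _

lemma mgLegal_append (m : V → V → ℕ) :
    ∀ (A B : List V) (f : V → ℤ),
      mgLegal m f (A ++ B) ↔ mgLegal m f A ∧ mgLegal m (mgPlay m f A) B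
  | [], B, f => by simp [mgLegal, mgPlay]
  | v :: A, B, f => by
    simp only [List.cons_append]
    show (_ ∧ mgLegal m _ (A ++ B)) ↔ (_ ∧ mgLegal m _ A) ∧ _
    rw [mgLegal_append m A B, mgPlay_cons, and_assoc]

lemma exists_split_first (m : V → V → ℕ) {v : V} :
    ∀ {M : List V}, v ∈ M → ∃ A B, M = A ++ v :: B ∧ v ∉ A := by
  intro M hv
  induction M with
  | nil => simp at hv
  | cons x M ih =>
    by_cases hx : v = x
    · exact ⟨[], M, by simp [hx], by simp⟩
    · obtain ⟨A, B, rfl, hA⟩ := ih (by rcases List.mem_cons.mp hv with h | h; exact absurd h hx; exact h)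
      exact ⟨x :: A, B, rfl, by simp [hx, hA]⟩

lemma exists_min_suffix [Nonempty V] :
    ∀ (M : List V), (∀ u : V, u ∈ M) →
      ∃ (A : List V) (v : V) (B : List V), M = A ++ v :: B ∧ v ∉ B ∧ ∀ u, u ≠ v → u ∈ B := by
  intro M
  induction M with
  | nil => intro h; exact absurd (h (Classical.arbitrary V)) (by simp)
  | cons x M ih =>
    intro h
    by_cases hM : ∀ u : V, u ∈ M
    · obtain ⟨A, v, B, rfl, h1, h2⟩ := ih hM
      exact ⟨x :: A, v, B, rfl, h1, h2⟩
    · push_neg at hM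
      obtain ⟨u, hu⟩ := hM
      have hux : u = x := by
        rcases List.mem_cons.mp (h u) with h' | h'
        · exact h'
        · exact absurd h' hu
      subst hux
      refine ⟨[], u, M, rfl, hu, fun w hw => ?_⟩
      rcases List.mem_cons.mp (h w) with h' | h'
      · exact absurd h' hw
      · exact h'

lemma mem_of_legal_of_stable (m : V → V → ℕ) :
    ∀ (L : List V), ∀ (f : V → ℤ) (M : List V),
      mgLegal m f L → mgLegal m f M → mgStable m (mgPlay m f M) →
      ∀ v ∈ L, v ∈ M := by
  intro L
  induction L with
  | nil => simp
  | cons v L ih =>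
    intro f M hL hM hst u hu
    obtain ⟨hv, hL'⟩ := hL
    have hvM : v ∈ M := by
      by_contra hvM
      have h1 : (mgDeg m v : ℤ) ≤ mgPlay m f M v := by
        rw [mgPlay_apply]
        have h0 : 0 ≤ (M.map (fun x => mgW m x v)).sum := by
          apply List.sum_nonneg
          intro a ha
          simp only [List.mem_map] at ha
          obtain ⟨x, hx, rfl⟩ := ha
          have hxv : v ≠ x := fun e => hvM (e ▸ hx)
          simp [mgW, hxv]
        linarith
      exact absurd (hst v) (not_lt.mpr h1)
    obtain ⟨A, B, rfl, hvA⟩ := exists_split_first m hvM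
    obtain ⟨hA, hv2, hB⟩ := (mgLegal_append m A (v :: B) f).mp hM
    have hfireA : mgLegal m (mgFire m f v) A := by
      apply mgLegal_mono m A f _ _ hA
      intro w hw
      rw [mgFire_apply]
      have hwv : w ≠ v := fun e => hvA (e ▸ hw)
      have : (0:ℤ) ≤ mgW m v w := by simp [mgW, hwv]
      linarith
    have hcomm : mgPlay m (mgFire m f v) A = mgFire m (mgPlay m f A) v := by
      funext w
      rw [mgPlay_apply, mgFire_apply, mgFire_apply, mgPlay_apply]
      ring
    have hB' : mgLegal m (mgFire m f v) (A ++ B) := by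
      rw [mgLegal_append]
      exact ⟨hfireA, by rw [hcomm]; exact hB⟩
    have hplayeq : mgPlay m (mgFire m f v) (A ++ B) = mgPlay m f (A ++ v :: B) := by
      rw [← mgPlay_cons]
      exact mgPlay_perm m f List.perm_middle.symm
    rcases List.mem_cons.mp hu with rfl | huL
    · exact hvM
    · have hres := ih (mgFire m f v) (A ++ B) hL' hB' (by rw [hplayeq]; exact hst) u huL
      rcases List.mem_append.mp hres with h | h
      · exact List.mem_append.mpr (Or.inl h)
      · exact List.mem_append.mpr (Or.inr (List.mem_cons_of_mem _ h))


/-- If there is a legal game from `f` in which every vertex fires at least once,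
then `f` is non-halting. -/
theorem stmt2 [Nonempty V] (m : V → V → ℕ) (hsymm : ∀ u v, m u v = m v u)
    (hloop : ∀ v, m v v = 0) (f : V → ℤ) (L : List V)
    (hL : mgLegal m f L) (hall : ∀ v : V, v ∈ L) :
    ¬ mgHalting m f := by
  rintro ⟨M, hM, hst⟩
  have hallM : ∀ v : V, v ∈ M := fun v => mem_of_legal_of_stable m L f M hL hM hst v (hall v)
  obtain ⟨A, v, B, rfl, hvB, hB⟩ := exists_min_suffix M hallM
  obtain ⟨hA, hv, hBleg⟩ := (mgLegal_append m A (v :: B) f).mp hM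
  set h := mgPlay m f A with hh
  have e1 : mgW m v v = -(mgDeg m v : ℤ) := by simp [mgW]
  have e2 : B.map (fun x => mgW m x v) = B.map (fun x => (m x v : ℤ)) := by
    apply List.map_congr_left
    intro x hx
    have hxv : v ≠ x := fun e => hvB (e.symm ▸ hx)
    simp [mgW, hxv]
  have hgv : mgPlay m f (A ++ v :: B) v =
      h v - (mgDeg m v : ℤ) + (B.map (fun x => (m x v : ℤ))).sum := by
    rw [mgPlay_append, mgPlay_cons, mgPlay_apply, mgFire_apply, e1, e2, ← hh]
    ring
  have hsum : (mgDeg m v : ℤ) ≤ (B.map (fun x => (m x v : ℤ))).sum := by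
    rw [Finset.sum_list_map_count]
    have h1 : (mgDeg m v : ℤ) = ∑ u ∈ Finset.univ.erase v, (m u v : ℤ) := by
      rw [mgDeg]
      push_cast
      rw [Finset.sum_erase _ (by simp [hloop])]
      exact Finset.sum_congr rfl fun u _ => by rw [hsymm]
    rw [h1]
    calc ∑ u ∈ Finset.univ.erase v, (m u v : ℤ)
        ≤ ∑ u ∈ B.toFinset, (m u v : ℤ) := by
          apply Finset.sum_le_sum_of_subset_of_nonneg
          · intro u hu
            exact List.mem_toFinset.mpr (hB u (Finset.mem_erase.mp hu).1)
          · intros; positivity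
      _ ≤ ∑ u ∈ B.toFinset, List.count u B • (m u v : ℤ) := by
          apply Finset.sum_le_sum
          intro u hu
          have hc : 1 ≤ List.count u B := List.count_pos_iff.mpr (List.mem_toFinset.mp hu)
          rw [nsmul_eq_mul]
          calc (m u v : ℤ) = 1 * (m u v : ℤ) := (one_mul _).symm
            _ ≤ (List.count u B : ℤ) * (m u v : ℤ) :=
                mul_le_mul_of_nonneg_right (by exact_mod_cast hc) (by positivity)
  have hcon := hst v
  rw [hgv] at hcon
  linarith
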